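/- There exist constants c₁ > 0 and n₀ ∈ ℕ such that for all n ≥ n₀, we have 1 + ∑_{k=1}^{n} φ(k) > c₁·n². In fact, one may take any c₁ < 3/π², but it suffices to prove the statement for some c₁ > 0. -/

import Mathlib

open Finset


-- Step 1: the swap identity
lemma swap_id' (n : ℕ) :
    ∑ d ∈ Icc 1 n, ∑ b ∈ Icc 1 (n / d), Nat.totient b = ∑ m ∈ Icc 1 n, m := by
  have key : ∀ d b : ℕ, (d ∈ Icc 1 n ∧ b ∈ Icc 1 (n / d)) ↔ (d ∈ Icc 1 (n / b) ∧ b ∈ Icc 1 n) := by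
    intro d b
    simp only [mem_Icc]
    constructor
    · rintro ⟨⟨hd1, hdn⟩, hb1, hbd⟩
      have h : b * d ≤ n := (Nat.le_div_iff_mul_le hd1).mp hbd
      refine ⟨⟨hd1, (Nat.le_div_iff_mul_le hb1).mpr (by rwa [Nat.mul_comm])⟩, hb1, ?_⟩
      calc b ≤ b * d := Nat.le_mul_of_pos_right _ hd1
        _ ≤ n := h
    · rintro ⟨⟨hd1, hdn⟩, hb1, hbn⟩
      have h : d * b ≤ n := (Nat.le_div_iff_mul_le hb1).mp hdn
      refine ⟨⟨hd1, ?_⟩, hb1, (Nat.le_div_iff_mul_le hd1).mpr (by rwa [Nat.mul_comm])⟩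
      calc d ≤ d * b := Nat.le_mul_of_pos_right _ hb1
        _ ≤ n := h
  rw [Finset.sum_comm' key]
  -- now LHS = ∑ b ∈ Icc 1 n, ∑ d ∈ Icc 1 (n/b), φ b = ∑ b, (n/b) * φ b
  have hL : ∀ b ∈ Icc 1 n, ∑ _d ∈ Icc 1 (n / b), Nat.totient b = (n / b) * Nat.totient b := by
    intro b _
    rw [Finset.sum_const, Nat.card_Icc]
    simp [smul_eq_mul]
  rw [Finset.sum_congr rfl hL]
  -- RHS: rewrite each m as divisor sum
  have hR : ∀ m ∈ Icc 1 n, m = ∑ b ∈ Icc 1 n, if b ∣ m then Nat.totient b else 0 := by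
    intro m hm
    rw [mem_Icc] at hm
    rw [← Finset.sum_filter]
    have hfil : (Icc 1 n).filter (· ∣ m) = m.divisors := by
      ext b
      simp only [mem_filter, mem_Icc, Nat.mem_divisors]
      constructor
      · rintro ⟨⟨hb1, hbn⟩, hbm⟩
        exact ⟨hbm, by omega⟩
      · rintro ⟨hbm, _⟩
        have hb1 : 0 < b := Nat.pos_of_dvd_of_pos hbm (by omega)
        have hbm' : b ≤ m := Nat.le_of_dvd (by omega) hbm
        exact ⟨⟨hb1, le_trans hbm' hm.2⟩, hbm⟩
    rw [hfil, Nat.sum_totient]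
  rw [Finset.sum_congr rfl hR, Finset.sum_comm]
  refine Finset.sum_congr rfl fun b hb => ?_
  rw [mem_Icc] at hb
  rw [← Finset.sum_filter, Finset.sum_const]
  have : Icc 1 n = Ioc 0 n := by rw [← Finset.Icc_add_one_left_eq_Ioc]; rfl
  rw [this]
  have := Nat.Ioc_filter_dvd_card_eq_div n b
  simp only [smul_eq_mul]
  rw [this]

lemma gauss_real' (m : ℕ) : ∑ k ∈ Icc 1 m, (k : ℝ) = m * (m + 1) / 2 := by
  induction m with
  | zero => simp
  | succ m ih =>
    rw [Finset.sum_Icc_succ_top (by omega), ih]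
    push_cast
    ring

lemma tail_bound' (n : ℕ) : ∑ d ∈ Icc 9 n, (1 : ℝ) / (d : ℝ) ^ 2 ≤ 1 / 8 := by
  rcases lt_or_ge n 9 with h | h
  · rw [Finset.Icc_eq_empty (by omega)]
    norm_num
  · have key : ∀ m : ℕ, 9 ≤ m → ∑ d ∈ Icc 9 m, (1 : ℝ) / (d : ℝ) ^ 2 ≤ 1 / 8 - 1 / m := by
      intro m hm
      induction m, hm using Nat.le_induction with
      | base => norm_num [show Finset.Icc 9 9 = {9} from rfl]
      | succ m hm ih =>
        rw [Finset.sum_Icc_succ_top (by omega)]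
        have hm' : (9 : ℝ) ≤ m := by exact_mod_cast hm
        have h1 : (0 : ℝ) < m := by linarith
        have h2 : (0 : ℝ) < (m : ℝ) + 1 := by linarith
        have : (1 : ℝ) / ((m : ℝ) + 1) ^ 2 ≤ 1 / m - 1 / (m + 1) := by
          rw [div_sub_div _ _ (ne_of_gt h1) (ne_of_gt h2)]
          rw [div_le_div_iff₀ (by positivity) (by positivity)]
          ring_nf
          nlinarith
        push_cast
        push_cast at ih
        linarith
    have h1 : (0 : ℝ) < n := by positivity
    have h2 : (1 : ℝ) / n > 0 := by positivity
    linarith [key n h]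

-- Φ m ≤ (m²+m)/2
lemma Phi_le (m : ℕ) : ∑ k ∈ Icc 1 m, (Nat.totient k : ℝ) ≤ ((m : ℝ) ^ 2 + m) / 2 := by
  have h1 : ∑ k ∈ Icc 1 m, (Nat.totient k : ℝ) ≤ ∑ k ∈ Icc 1 m, (k : ℝ) :=
    Finset.sum_le_sum fun k _ => by exact_mod_cast Nat.totient_le k
  rw [gauss_real'] at h1
  nlinarith [h1]

lemma Phi_le_sq (m : ℕ) : ∑ k ∈ Icc 1 m, (Nat.totient k : ℝ) ≤ (m : ℝ) ^ 2 := by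
  have := Phi_le m
  rcases Nat.eq_zero_or_pos m with h | h
  · subst h; simpa using this
  · have : (1 : ℝ) ≤ m := by exact_mod_cast h
    nlinarith [Phi_le m]

theorem totient_sum_lower_bound :
    ∃ c₁ : ℝ, 0 < c₁ ∧ ∃ n₀ : ℕ, ∀ n : ℕ, n₀ ≤ n →
      c₁ * (n : ℝ) ^ 2 < 1 + ∑ k ∈ Finset.Icc 1 n, (Nat.totient k : ℝ) := by
  refine ⟨1/20, by norm_num, 100, fun n hn => ?_⟩
  have hn1 : 1 ≤ n := by omega
  have hnR : (100 : ℝ) ≤ n := by exact_mod_cast hn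
  have hnpos : (0 : ℝ) < n := by linarith
  -- cast the identity
  have id1 : ∑ d ∈ Icc 1 n, ∑ k ∈ Icc 1 (n / d), (Nat.totient k : ℝ)
      = (n : ℝ) * (n + 1) / 2 := by
    have h2 : ((∑ d ∈ Icc 1 n, ∑ b ∈ Icc 1 (n / d), Nat.totient b : ℕ) : ℝ)
        = ((∑ m ∈ Icc 1 n, m : ℕ) : ℝ) := by exact_mod_cast swap_id' n
    push_cast at h2
    rw [h2, gauss_real' n]
  -- split off d = 1
  have split1 : ∑ d ∈ Ioc 0 1, ∑ k ∈ Icc 1 (n / d), (Nat.totient k : ℝ)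
      + ∑ d ∈ Ioc 1 n, ∑ k ∈ Icc 1 (n / d), (Nat.totient k : ℝ)
      = ∑ d ∈ Icc 1 n, ∑ k ∈ Icc 1 (n / d), (Nat.totient k : ℝ) := by
    have he : Finset.Icc 1 n = Finset.Ioc 0 n := by rw [← Finset.Icc_add_one_left_eq_Ioc]; rfl
    rw [he]
    exact Finset.sum_Ioc_consecutive _ (by omega) (by omega)
  have hIoc01 : ∑ d ∈ Ioc 0 1, ∑ k ∈ Icc 1 (n / d), (Nat.totient k : ℝ)
      = ∑ k ∈ Icc 1 n, (Nat.totient k : ℝ) := by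
    rw [show Finset.Ioc 0 1 = ({1} : Finset ℕ) from rfl]
    simp
  -- split 2..8 and 9..n
  have split2 : ∑ d ∈ Ioc 1 8, ∑ k ∈ Icc 1 (n / d), (Nat.totient k : ℝ)
      + ∑ d ∈ Ioc 8 n, ∑ k ∈ Icc 1 (n / d), (Nat.totient k : ℝ)
      = ∑ d ∈ Ioc 1 n, ∑ k ∈ Icc 1 (n / d), (Nat.totient k : ℝ) :=
    Finset.sum_Ioc_consecutive _ (by omega) (by omega)
  -- per-term bound for small d
  have hsmall : ∀ d : ℕ, 1 ≤ d →
      ∑ k ∈ Icc 1 (n / d), (Nat.totient k : ℝ) ≤ (((n:ℝ)/d)^2 + (n:ℝ)/d) / 2 := by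
    intro d hd
    have h1 := Phi_le (n / d)
    have h2 : ((n / d : ℕ) : ℝ) ≤ (n : ℝ) / d := Nat.cast_div_le
    have h3 : (0 : ℝ) ≤ ((n / d : ℕ) : ℝ) := Nat.cast_nonneg _
    nlinarith
  have hA : ∑ d ∈ Ioc 1 8, ∑ k ∈ Icc 1 (n / d), (Nat.totient k : ℝ)
      ≤ ∑ d ∈ (Finset.Ioc 1 8 : Finset ℕ), ((((n:ℝ)/(d:ℝ))^2 + (n:ℝ)/(d:ℝ)) / 2) := by
    refine Finset.sum_le_sum fun d hd => ?_
    rw [mem_Ioc] at hd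
    exact hsmall d (by omega)
  have hAval : ∑ d ∈ (Finset.Ioc 1 8 : Finset ℕ), ((((n:ℝ)/(d:ℝ))^2 + (n:ℝ)/(d:ℝ)) / 2)
      = (n:ℝ)^2 * (372149/1411200) + (n:ℝ) * (481/560) := by
    rw [show Finset.Ioc 1 8 = ({2,3,4,5,6,7,8} : Finset ℕ) from rfl]
    norm_num
    ring
  -- large d
  have hB : ∑ d ∈ Ioc 8 n, ∑ k ∈ Icc 1 (n / d), (Nat.totient k : ℝ)
      ≤ (n:ℝ)^2 * (1/8) := by
    have step : ∑ d ∈ Ioc 8 n, ∑ k ∈ Icc 1 (n / d), (Nat.totient k : ℝ)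
        ≤ ∑ d ∈ Ioc 8 n, (n:ℝ)^2 * (1/(d:ℝ)^2) := by
      refine Finset.sum_le_sum fun d hd => ?_
      rw [mem_Ioc] at hd
      have hd8 : (8:ℝ) < d := by exact_mod_cast hd.1
      have hdpos : (0:ℝ) < d := by linarith
      have h1 := Phi_le_sq (n / d)
      have h2 : ((n / d : ℕ) : ℝ) ≤ (n : ℝ) / d := Nat.cast_div_le
      have h3 : (0 : ℝ) ≤ ((n / d : ℕ) : ℝ) := Nat.cast_nonneg _
      have h4 : ((n / d : ℕ) : ℝ)^2 ≤ ((n:ℝ)/d)^2 := by nlinarith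
      have h5 : ((n:ℝ)/d)^2 = (n:ℝ)^2 * (1/(d:ℝ)^2) := by field_simp
      linarith
    rw [← Finset.mul_sum] at step
    have htail : ∑ d ∈ Ioc 8 n, (1:ℝ)/(d:ℝ)^2 ≤ 1/8 := by
      rw [← Finset.Icc_add_one_left_eq_Ioc 8 n]
      exact tail_bound' n
    nlinarith [sq_nonneg (n:ℝ)]
  -- assemble
  have hPhi : ∑ k ∈ Icc 1 n, (Nat.totient k : ℝ)
      = (n : ℝ) * (n + 1) / 2
        - ∑ d ∈ Ioc 1 8, ∑ k ∈ Icc 1 (n / d), (Nat.totient k : ℝ)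
        - ∑ d ∈ Ioc 8 n, ∑ k ∈ Icc 1 (n / d), (Nat.totient k : ℝ) := by
    rw [← id1, ← split1, hIoc01, ← split2]
    ring
  rw [hPhi]
  nlinarith [hA, hAval, hB]
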